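/- Let c₁ ∈ ℝ and c₂ ∈ ℂ with c₁ > |c₂|. Then the set { c₁·(|λ|² + |μ|²) + 2·Re(c₂·λ·conj(μ)) : λ, μ ∈ ℂ with |λ|² − |μ|² = 1 } has least element √(c₁² − |c₂|²); that is, the minimum of this quadratic functional over the Bogoliubov constraint set exists and equals √(c₁² − |c₂|²). -/

import Mathlib

/-- The minimisation defining states of low energy: for `c₁ > |c₂|`, the quadratic
functional `c₁(|λ|² + |μ|²) + 2 Re(c₂ λ μ̄)` on the Bogoliubov constraint set
`|λ|² - |μ|² = 1` attains the minimum value `√(c₁² - |c₂|²)`. -/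
theorem stmt_16 (c₁ : ℝ) (c₂ : ℂ) (h : ‖c₂‖ < c₁) :
    IsLeast {x : ℝ | ∃ l u : ℂ, ‖l‖ ^ 2 - ‖u‖ ^ 2 = 1 ∧
        x = c₁ * (‖l‖ ^ 2 + ‖u‖ ^ 2) +
          2 * (c₂ * l * (starRingEnd ℂ) u).re}
      (Real.sqrt (c₁ ^ 2 - ‖c₂‖ ^ 2)) := by
  set a := ‖c₂‖ with ha
  have ha0 : 0 ≤ a := norm_nonneg c₂
  have hc₁ : 0 < c₁ := lt_of_le_of_lt ha0 h
  set m := Real.sqrt (c₁ ^ 2 - a ^ 2) with hm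
  have hm2 : m ^ 2 = c₁ ^ 2 - a ^ 2 := Real.sq_sqrt (by nlinarith)
  have hmpos : 0 < m := Real.sqrt_pos.mpr (by nlinarith)
  have hmc : m ≤ c₁ := by nlinarith
  constructor
  · -- membership: exhibit the minimiser
    by_cases hz : c₂ = 0
    · refine ⟨1, 0, by simp, ?_⟩
      have ha' : a = 0 := by simp [ha, hz]
      have hmc₁ : m = c₁ := by nlinarith
      simp [hz, hmc₁]
    · have ha0' : 0 < a := norm_pos_iff.mpr hz
      set r := Real.sqrt ((c₁ + m) / (2 * m)) with hr
      set s := Real.sqrt ((c₁ - m) / (2 * m)) with hs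
      have hrn : 0 ≤ r := Real.sqrt_nonneg _
      have hsn : 0 ≤ s := Real.sqrt_nonneg _
      have hr2 : r ^ 2 = (c₁ + m) / (2 * m) := Real.sq_sqrt (by positivity)
      have hs2 : s ^ 2 = (c₁ - m) / (2 * m) :=
        Real.sq_sqrt (div_nonneg (by linarith) (by linarith))
      have hrs : r * s = a / (2 * m) := by
        rw [hr, hs, ← Real.sqrt_mul (by positivity)]
        have hx : (c₁ + m) / (2 * m) * ((c₁ - m) / (2 * m)) = (a / (2 * m)) ^ 2 := by
          field_simp
          nlinarith
        rw [hx, Real.sqrt_sq (by positivity)]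
      refine ⟨(r : ℂ), -(c₂ / (a : ℂ)) * (s : ℂ), ?_, ?_⟩
      · have habsl : ‖((r : ℝ) : ℂ)‖ = r := by
          rw [Complex.norm_real, Real.norm_eq_abs, abs_of_nonneg hrn]
        have habsu : ‖-(c₂ / (a : ℂ)) * (s : ℂ)‖ = s := by
          rw [norm_mul, norm_neg, norm_div, Complex.norm_real, Complex.norm_real,
            Real.norm_eq_abs, Real.norm_eq_abs, abs_of_nonneg ha0, abs_of_nonneg hsn, ← ha, div_self ha0'.ne', one_mul]
        rw [habsl, habsu, hr2, hs2]
        field_simp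
        ring
      · have habsl : ‖((r : ℝ) : ℂ)‖ = r := by
          rw [Complex.norm_real, Real.norm_eq_abs, abs_of_nonneg hrn]
        have habsu : ‖-(c₂ / (a : ℂ)) * (s : ℂ)‖ = s := by
          rw [norm_mul, norm_neg, norm_div, Complex.norm_real, Complex.norm_real,
            Real.norm_eq_abs, Real.norm_eq_abs, abs_of_nonneg ha0, abs_of_nonneg hsn, ← ha, div_self ha0'.ne', one_mul]
        have h1 : c₂ * (starRingEnd ℂ) c₂ = ((a : ℂ)) ^ 2 := by
          rw [Complex.mul_conj]
          norm_cast
          rw [← Complex.sq_norm]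
        have hane : ((a : ℝ) : ℂ) ≠ 0 := by
          exact_mod_cast Complex.ofReal_ne_zero.mpr ha0'.ne'
        have key : c₂ * (r : ℂ) * (starRingEnd ℂ) (-(c₂ / (a : ℂ)) * (s : ℂ)) =
            ((-(a * (r * s)) : ℝ) : ℂ) := by
          rw [map_mul, map_neg, map_div₀, Complex.conj_ofReal, Complex.conj_ofReal]
          field_simp
          rw [mul_comm c₂ ((r:ℂ))]
          push_cast
          linear_combination (-((r : ℂ) * (s : ℂ))) * h1
        rw [habsl, habsu, key, Complex.ofReal_re, hr2, hs2, hrs]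
        field_simp
        nlinarith
  · -- lower bound
    rintro x ⟨l, u, hc, rfl⟩
    set X := ‖l‖ with hX
    set Y := ‖u‖ with hY
    have hXn : 0 ≤ X := norm_nonneg l
    have hYn : 0 ≤ Y := norm_nonneg u
    have hre : -(a * (X * Y)) ≤ (c₂ * l * (starRingEnd ℂ) u).re := by
      have h1 : -‖c₂ * l * (starRingEnd ℂ) u‖ ≤
          (c₂ * l * (starRingEnd ℂ) u).re := by
        have h1a := Complex.abs_re_le_norm (c₂ * l * (starRingEnd ℂ) u)
        have h1b := neg_abs_le (c₂ * l * (starRingEnd ℂ) u).re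
        linarith
      have h2 : ‖c₂ * l * (starRingEnd ℂ) u‖ = a * (X * Y) := by
        rw [norm_mul, norm_mul, Complex.norm_conj]
        ring
      linarith [h2 ▸ h1]
    set p := Real.sqrt (c₁ - m) with hp
    set q := Real.sqrt (c₁ + m) with hq
    have hp2 : p ^ 2 = c₁ - m := Real.sq_sqrt (by linarith)
    have hq2 : q ^ 2 = c₁ + m := Real.sq_sqrt (by linarith)
    have hpq : p * q = a := by
      rw [hp, hq, ← Real.sqrt_mul (by linarith)]
      have : (c₁ - m) * (c₁ + m) = a ^ 2 := by nlinarith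
      rw [this, Real.sqrt_sq ha0]
    have hexp : 0 ≤ (c₁ - m) * X ^ 2 - 2 * a * (X * Y) + (c₁ + m) * Y ^ 2 := by
      have h0 : 0 ≤ (p * X - q * Y) ^ 2 := sq_nonneg _
      have heq : (p * X - q * Y) ^ 2 =
          p ^ 2 * X ^ 2 - 2 * (p * q) * (X * Y) + q ^ 2 * Y ^ 2 := by ring
      rw [heq, hp2, hq2, hpq] at h0
      linarith
    have hmc' : m * X ^ 2 - m * Y ^ 2 = m := by
      rw [← mul_sub, hc, mul_one]
    linarith [hexp, hre, hmc']
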